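/- arXiv:1901.07516 — 5 statements merged into one kernel-verified Lean document; each statement's English description precedes it below -/
import Mathlib

section
/- Let H be a real Hilbert space and let (V_1,…,V_N) be an innately regular collection of closed linear subspaces of H. Let η ∈ (0,1] and γ > 0. Then there exists a constant C < ∞ (depending only on (V_1,…,V_N), η and γ) such that for every initial point x_0 ∈ H, every control sequence (i_n)_{n≥0} with i_n ∈ {1,…,N}, and every sequence of relaxation coefficients (λ_n)_{n≥0} with λ_n ∈ [η, 2−η], the trajectory defined by x_{n+1} := P_{i_n,λ_n}(x_n) satisfies ∑_{n=0}^∞ ‖x_{n+1} − x_n‖^γ ≤ C·‖x_0‖^γ. -/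
open Metric

noncomputable def relaxProj {H : Type*} [NormedAddCommGroup H] [InnerProductSpace ℝ H]
    (V : Submodule ℝ H) [V.HasOrthogonalProjection] (l : ℝ) (x : H) : H :=
  (1 - l) • x + l • (V.orthogonalProjectionOnto x : H)

set_option linter.unusedVariables false
set_option linter.unusedSectionVars false

section Helpers

variable {H : Type*} [NormedAddCommGroup H] [InnerProductSpace ℝ H]

private lemma sqle {a b : ℝ} (ha : 0 ≤ a) (hb : 0 ≤ b) (h : a ^ 2 ≤ b ^ 2) : a ≤ b := by
  nlinarith

private lemma infDist_eq_proj (K : Submodule ℝ H) [Submodule.HasOrthogonalProjection K] (x : H) :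
    infDist x (K : Set H) = ‖x - Submodule.orthogonalProjectionOnto K x‖ := by
  rw [infDist_eq_iInf, ← Submodule.starProjection_apply, Submodule.starProjection_minimal]
  simp [dist_eq_norm]

private lemma relaxProj_sub_self (V : Submodule ℝ H) [Submodule.HasOrthogonalProjection V] (l : ℝ) (x : H) :
    relaxProj V l x - x = l • ((Submodule.orthogonalProjectionOnto V x : H) - x) := by
  simp [relaxProj, sub_smul, smul_sub]; abel

private lemma norm_relaxProj_sub_self (V : Submodule ℝ H) [Submodule.HasOrthogonalProjection V] {l : ℝ}
    (hl : 0 ≤ l) (x : H) :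
    ‖relaxProj V l x - x‖ = l * ‖x - Submodule.orthogonalProjectionOnto V x‖ := by
  rw [relaxProj_sub_self, norm_smul, Real.norm_of_nonneg hl, norm_sub_rev]

/-- key one-step energy estimate -/
private lemma step_energy (V : Submodule ℝ H) [Submodule.HasOrthogonalProjection V] {l η : ℝ}
    (hη : 0 < η) (hl : l ∈ Set.Icc η (2 - η)) (x : H) {z : H} (hz : z ∈ V) :
    ‖relaxProj V l x - z‖ ^ 2 + η / 2 * ‖relaxProj V l x - x‖ ^ 2 ≤ ‖x - z‖ ^ 2 := by
  set p : H := (Submodule.orthogonalProjectionOnto V x : H) with hp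
  have hpV : p ∈ V := (Submodule.orthogonalProjectionOnto V x).2
  have hxp : x - p ∈ Vᗮ := Submodule.sub_starProjection_mem_orthogonal x
  have hl0 : 0 < l := lt_of_lt_of_le hη hl.1
  have hdec : relaxProj V l x - z = (1 - l) • (x - p) + (p - z) := by
    simp [relaxProj, smul_sub, sub_smul, hp]; abel
  have hdec2 : x - z = (x - p) + (p - z) := by abel
  have hinner : (inner ℝ (x - p) (p - z) : ℝ) = 0 := by
    rw [real_inner_comm]; exact hxp (p - z) (V.sub_mem hpV hz)
  have h1 : ‖x - z‖ ^ 2 = ‖x - p‖ ^ 2 + ‖p - z‖ ^ 2 := by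
    rw [hdec2, norm_add_sq_real, hinner]; ring
  have h2 : ‖relaxProj V l x - z‖ ^ 2 = (1 - l) ^ 2 * ‖x - p‖ ^ 2 + ‖p - z‖ ^ 2 := by
    rw [hdec, norm_add_sq_real]
    have : (inner ℝ ((1 - l) • (x - p)) (p - z) : ℝ) = 0 := by
      rw [real_inner_smul_left, hinner]; ring
    rw [this, norm_smul, Real.norm_eq_abs, mul_pow, sq_abs]
    ring
  have h3 : ‖relaxProj V l x - x‖ ^ 2 = l ^ 2 * ‖x - p‖ ^ 2 := by
    rw [norm_relaxProj_sub_self V hl0.le, mul_pow]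
  rw [h1, h2, h3]
  have key : η / 2 * l ≤ 2 - l := by
    nlinarith [mul_le_mul_of_nonneg_left hl.2 hη.le, hl.2, sq_nonneg η]
  have hcoef : (1 - l) ^ 2 + η / 2 * l ^ 2 ≤ 1 := by
    nlinarith [mul_le_mul_of_nonneg_right key hl0.le]
  nlinarith [mul_le_mul_of_nonneg_right hcoef (sq_nonneg ‖x - p‖)]

private lemma infDist_anti {W W' : Submodule ℝ H} (h : W ≤ W') (x : H) :
    infDist x (W' : Set H) ≤ infDist x (W : Set H) :=
  infDist_le_infDist_of_subset h ⟨0, W.zero_mem⟩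

/-- distance-to-`W` version of the one-step estimate -/
private lemma step_dist (V : Submodule ℝ H) [Submodule.HasOrthogonalProjection V]
    (W : Submodule ℝ H) [Submodule.HasOrthogonalProjection W] (hWV : W ≤ V) {l η : ℝ}
    (hη : 0 < η) (hl : l ∈ Set.Icc η (2 - η)) (x : H) :
    infDist (relaxProj V l x) (W : Set H) ^ 2 + η / 2 * ‖relaxProj V l x - x‖ ^ 2
      ≤ infDist x (W : Set H) ^ 2 := by
  set z : H := (Submodule.orthogonalProjectionOnto W x : H) with hz
  have hzW : z ∈ W := (Submodule.orthogonalProjectionOnto W x).2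
  have h1 : infDist (relaxProj V l x) (W : Set H) ≤ ‖relaxProj V l x - z‖ := by
    simpa [dist_eq_norm] using infDist_le_dist_of_mem (x := relaxProj V l x) hzW
  have h2 : infDist x (W : Set H) = ‖x - z‖ := infDist_eq_proj W x
  have h3 := step_energy V hη hl x (hWV hzW)
  have h4 : infDist (relaxProj V l x) (W : Set H) ^ 2 ≤ ‖relaxProj V l x - z‖ ^ 2 :=
    pow_le_pow_left₀ infDist_nonneg h1 2
  rw [h2]
  linarith

private lemma disp_le_two_infDist (V : Submodule ℝ H) [Submodule.HasOrthogonalProjection V]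
    (W : Submodule ℝ H) (hWV : W ≤ V) {l η : ℝ} (hη : 0 < η) (hl : l ∈ Set.Icc η (2 - η))
    (x : H) : ‖relaxProj V l x - x‖ ≤ 2 * infDist x (W : Set H) := by
  rw [norm_relaxProj_sub_self V (le_of_lt (lt_of_lt_of_le hη hl.1)), ← infDist_eq_proj]
  have h1 : infDist x (V : Set H) ≤ infDist x (W : Set H) := infDist_anti hWV x
  have h2 : l ≤ 2 := by have := hl.2; linarith
  have := infDist_nonneg (x := x) (s := (V : Set H))
  nlinarith

private lemma eta_infDist_le_disp (V : Submodule ℝ H) [Submodule.HasOrthogonalProjection V]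
    {l η : ℝ} (hη : 0 < η) (hl : l ∈ Set.Icc η (2 - η)) (x : H) :
    η * infDist x (V : Set H) ≤ ‖relaxProj V l x - x‖ := by
  rw [norm_relaxProj_sub_self V (le_of_lt (lt_of_lt_of_le hη hl.1)), ← infDist_eq_proj]
  have := infDist_nonneg (x := x) (s := (V : Set H))
  nlinarith [hl.1]

end Helpers

section Family

variable {H : Type*} [NormedAddCommGroup H] [InnerProductSpace ℝ H] [CompleteSpace H]
variable {N : ℕ} (V : Fin N → Submodule ℝ H) [∀ i, CompleteSpace (V i)]

private lemma hop (J : Finset (Fin N)) :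
    Submodule.HasOrthogonalProjection (⨅ i ∈ J, V i : Submodule ℝ H) := by
  have hcl : IsClosed ((⨅ i ∈ J, V i : Submodule ℝ H) : Set H) := by
    rw [Submodule.coe_iInf]
    refine isClosed_iInter fun i => ?_
    rw [Submodule.coe_iInf]
    exact isClosed_iInter fun _ =>
      (completeSpace_coe_iff_isComplete.1 inferInstance).isClosed
  haveI : CompleteSpace (⨅ i ∈ J, V i : Submodule ℝ H) := hcl.completeSpace_coe
  infer_instance

private lemma VJ_le {J : Finset (Fin N)} {j : Fin N} (hj : j ∈ J) :
    (⨅ i ∈ J, V i : Submodule ℝ H) ≤ V j := iInf₂_le j hj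

private lemma VJ_mono {J' J : Finset (Fin N)} (h : J' ⊆ J) :
    (⨅ i ∈ J, V i : Submodule ℝ H) ≤ (⨅ i ∈ J', V i : Submodule ℝ H) :=
  le_iInf₂ fun j hj => VJ_le V (h hj)

end Family

section Key

open Finset

variable {H : Type*} [NormedAddCommGroup H] [InnerProductSpace ℝ H] [CompleteSpace H]
variable {N : ℕ}

set_option maxHeartbeats 8000000 in
private lemma key (V : Fin N → Submodule ℝ H) [∀ i, CompleteSpace (V i)]
    {η Km : ℝ} (hη : η ∈ Set.Ioc (0:ℝ) 1) (hKm1 : 1 ≤ Km)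
    (hKm : ∀ (J : Finset (Fin N)) (hJ : J.Nonempty) (y : H),
      infDist y ((⨅ i ∈ J, V i : Submodule ℝ H) : Set H) ≤
        Km * J.sup' hJ fun j => infDist y (V j : Set H))
    (m : ℕ) :
    ∀ γ : ℝ, 0 < γ → ∃ C : ℝ, 0 ≤ C ∧
      ∀ (J : Finset (Fin N)) (i : ℕ → Fin N) (lam : ℕ → ℝ) (x : ℕ → H),
        J.card ≤ m → (∀ n, lam n ∈ Set.Icc η (2 - η)) →
        (∀ n, x (n + 1) = relaxProj (V (i n)) (lam n) (x n)) →
        ∀ T : ℕ, (∀ n < T, i n ∈ J) →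
          ∑ n ∈ Finset.range T, ‖x (n + 1) - x n‖ ^ γ ≤
            C * infDist (x 0) ((⨅ i ∈ J, V i : Submodule ℝ H) : Set H) ^ γ := by
  classical
  have hη0 : 0 < η := hη.1
  have hη1 : η ≤ 1 := hη.2
  induction m with
  | zero =>
      intro γ hγ
      refine ⟨0, le_rfl, ?_⟩
      intro J i lam x hcard hlam htraj T hctrl
      match T with
      | 0 => simp
      | (T + 1) =>
          exact absurd (hctrl 0 T.succ_pos)
            (by rw [Finset.card_eq_zero.1 (Nat.le_zero.1 hcard)]; exact Finset.notMem_empty _)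
  | succ m IH =>
      intro γ hγ
      obtain ⟨Ch, hCh0, hCh⟩ := IH (1/2 : ℝ) (by norm_num)
      obtain ⟨Cγ, hCγ0, hCγ⟩ := IH γ hγ
      -- constants
      set K : ℝ := Km * (1 + 1/η) with hKdef
      have hK1 : 1 ≤ K := by
        have h1 : (1:ℝ) ≤ 1 + 1/η := by
          have h0 : 0 < 1/η := by positivity
          linarith only [h0]
        have h2 : (1:ℝ) * 1 ≤ Km * (1 + 1/η) :=
          mul_le_mul hKm1 h1 (by norm_num) (by linarith only [hKm1])
        rw [hKdef]
        linarith only [h2]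
      have hK0 : 0 < K := lt_of_lt_of_le one_pos hK1
      set CA : ℝ := Ch + 2 with hCAdef
      have hCA2 : (2:ℝ) ≤ CA := by linarith
      have hCA0 : 0 < CA := by linarith
      set E : ℝ := 2 * K ^ 3 * CA ^ 2 / η with hEdef
      have hE0 : 0 < E := by positivity
      set σ : ℝ := E / (1 + E) with hσdef
      have hσ0 : 0 ≤ σ := by positivity
      have hσ1 : σ < 1 := by
        rw [hσdef, div_lt_one (by positivity)]; linarith only []
      set ρ : ℝ := σ ^ ((1/3 : ℝ) * γ) with hρdef
      have hρ0 : 0 ≤ ρ := Real.rpow_nonneg hσ0 _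
      have hρ1 : ρ < 1 := Real.rpow_lt_one hσ0 hσ1 (by positivity)
      set Cwin : ℝ := Cγ + 2 ^ γ with hCwindef
      have hCwin0 : 0 ≤ Cwin := by positivity
      set Ctot : ℝ := max Cγ (Cwin / (1 - ρ)) with hCtotdef
      have hCtot0 : 0 ≤ Ctot := le_trans hCγ0 (le_max_left _ _)
      have hCγtot : Cγ ≤ Ctot := le_max_left _ _
      have hCwintot : Cwin + Ctot * ρ ≤ Ctot := by
        have h1 : Cwin / (1 - ρ) ≤ Ctot := le_max_right _ _
        have h2 : Cwin ≤ Ctot * (1 - ρ) :=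
          (div_le_iff₀ (by linarith only [hρ1] : (0:ℝ) < 1 - ρ)).1 h1
        linarith only [h2]
      refine ⟨Ctot, hCtot0, ?_⟩
      have main : ∀ (J : Finset (Fin N)), J.card ≤ m + 1 → ∀ T : ℕ,
          ∀ (i : ℕ → Fin N) (lam : ℕ → ℝ) (x : ℕ → H),
          (∀ n, lam n ∈ Set.Icc η (2 - η)) →
          (∀ n, x (n + 1) = relaxProj (V (i n)) (lam n) (x n)) →
          (∀ n < T, i n ∈ J) →
          ∑ n ∈ Finset.range T, ‖x (n + 1) - x n‖ ^ γ ≤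
            Ctot * infDist (x 0) ((⨅ i ∈ J, V i : Submodule ℝ H) : Set H) ^ γ := by
        intro J hcard T
        induction T using Nat.strongRecOn with
        | ind T IHT =>
        intro i lam x hlam htraj hctrl
        haveI : Submodule.HasOrthogonalProjection (⨅ i ∈ J, V i : Submodule ℝ H) := hop V J
        set W : Submodule ℝ H := (⨅ i ∈ J, V i : Submodule ℝ H) with hWdef
        set u : ℕ → ℝ := fun n => ‖x (n + 1) - x n‖ with hudef
        set dJ : ℕ → ℝ := fun n => infDist (x n) (W : Set H) with hdJdef
        have hu0 : ∀ n, 0 ≤ u n := fun n => norm_nonneg _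
        have hdJ0 : ∀ n, 0 ≤ dJ n := fun n => infDist_nonneg
        -- basic per-step facts
        have hWle : ∀ n, n < T → W ≤ V (i n) := fun n hn => VJ_le V (hctrl n hn)
        have hstep : ∀ n < T, dJ (n + 1) ^ 2 + η / 2 * u n ^ 2 ≤ dJ n ^ 2 := by
          intro n hn
          have h := step_dist (V (i n)) W (hWle n hn) hη0 (hlam n) (x n)
          rw [← htraj n] at h
          exact h
        have hmono1 : ∀ n < T, dJ (n + 1) ≤ dJ n := by
          intro n hn
          refine sqle (hdJ0 _) (hdJ0 _) ?_
          have h0 : 0 ≤ η / 2 * u n ^ 2 := mul_nonneg (by linarith only [hη0]) (sq_nonneg _)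
          linarith only [hstep n hn, h0]
        have hmono : ∀ s t : ℕ, s ≤ t → t ≤ T → dJ t ≤ dJ s := by
          intro s t hst
          induction t, hst using Nat.le_induction with
          | base => intro _; exact le_rfl
          | succ t ht IH2 =>
              intro h
              exact le_trans (hmono1 t (by omega)) (IH2 (by omega))
        have htel : ∀ t, t ≤ T → dJ t ^ 2 + η / 2 * ∑ n ∈ range t, u n ^ 2 ≤ dJ 0 ^ 2 := by
          intro t
          induction t with
          | zero => intro _; simp
          | succ t IH2 =>
              intro h
              rw [Finset.sum_range_succ]
              have h1 := hstep t (by omega)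
              have h2 := IH2 (by omega)
              linarith only [h1, h2]
        have hu2 : ∀ n < T, u n ≤ 2 * dJ n := by
          intro n hn
          have h := disp_le_two_infDist (V (i n)) W (hWle n hn) hη0 (hlam n) (x n)
          rw [← htraj n] at h
          exact h
        have huη : ∀ n < T, η * infDist (x n) (V (i n) : Set H) ≤ u n := by
          intro n hn
          have h := eta_infDist_le_disp (V (i n)) hη0 (hlam n) (x n)
          rw [← htraj n] at h
          exact h
        have htravel : ∀ s t : ℕ, s ≤ t → ‖x t - x s‖ ≤ ∑ n ∈ Finset.Ico s t, u n := by
          intro s t hst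
          induction t, hst using Nat.le_induction with
          | base => simp
          | succ t ht IH2 =>
              rw [Finset.sum_Ico_succ_top ht]
              have h1 : ‖x (t + 1) - x s‖ ≤ ‖x (t + 1) - x t‖ + ‖x t - x s‖ := by
                have : x (t + 1) - x s = (x (t + 1) - x t) + (x t - x s) := by abel
                rw [this]; exact norm_add_le _ _
              have : ‖x (t+1) - x t‖ = u t := rfl
              linarith
        -- dispose of T = 0
        rcases Nat.eq_zero_or_pos T with rfl | hT
        · simpa using mul_nonneg hCtot0 (Real.rpow_nonneg (hdJ0 0) γ)
        have hJne : J.Nonempty := ⟨i 0, hctrl 0 hT⟩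
        by_cases hex : ∃ t, t ≤ T ∧ (Finset.range t).image i = J
        · -- a full sweep occurs: window argument
          set t₁ : ℕ := Nat.find hex with ht₁def
          obtain ⟨ht₁T, ht₁im⟩ : t₁ ≤ T ∧ (Finset.range t₁).image i = J := Nat.find_spec hex
          have ht₁pos : 0 < t₁ := by
            rcases Nat.eq_zero_or_pos t₁ with h0 | h; swap
            · exact h
            · exfalso
              rw [h0] at ht₁im
              simp at ht₁im
              exact hJne.ne_empty ht₁im.symm
          set t₀ : ℕ := t₁ - 1 with ht₀def
          have ht₁eq : t₁ = t₀ + 1 := by omega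
          set J' : Finset (Fin N) := (Finset.range t₀).image i with hJ'def
          have hJ'sub : J' ⊆ J := by
            intro j hj
            obtain ⟨n, hn, rfl⟩ := Finset.mem_image.1 hj
            exact hctrl n (by have := Finset.mem_range.1 hn; omega)
          have hJ'ne : J' ≠ J := by
            intro h
            exact Nat.find_min hex (show t₀ < t₁ by omega) ⟨by omega, h⟩
          have hcard' : J'.card ≤ m := by
            have h1 : J'.card < J.card :=
              lt_of_le_of_ne (Finset.card_le_card hJ'sub)
                (fun hc => hJ'ne (Finset.eq_of_subset_of_card_le hJ'sub (le_of_eq hc.symm)))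
            omega
          have hctrl' : ∀ n < t₀, i n ∈ J' :=
            fun n hn => Finset.mem_image.2 ⟨n, Finset.mem_range.2 hn, rfl⟩
          have hWW' : W ≤ (⨅ i ∈ J', V i : Submodule ℝ H) := VJ_mono V hJ'sub
          have hd' : infDist (x 0) ((⨅ i ∈ J', V i : Submodule ℝ H) : Set H) ≤ dJ 0 :=
            infDist_anti hWW' (x 0)
          set S : ℝ := ∑ n ∈ range t₁, u n with hSdef
          set A : ℝ := ∑ n ∈ range t₁, u n ^ (1/2 : ℝ) with hAdef
          set B : ℝ := ∑ n ∈ range t₁, u n ^ (3/2 : ℝ) with hBdef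
          set Q : ℝ := ∑ n ∈ range t₁, u n ^ 2 with hQdef
          have hS0 : 0 ≤ S := Finset.sum_nonneg fun n _ => hu0 n
          have hA0 : 0 ≤ A := Finset.sum_nonneg fun n _ => Real.rpow_nonneg (hu0 n) _
          have hQ0 : 0 ≤ Q := Finset.sum_nonneg fun n _ => sq_nonneg _
          -- (W2) lower bound on S from regularity
          have hD1S : dJ t₁ ≤ K * S := by
            have hSu : ∀ s, s < t₁ → u s ≤ S := by
              intro s hs
              exact Finset.single_le_sum (fun n _ => hu0 n) (Finset.mem_range.2 hs)
            have hsup : ∀ j ∈ J, infDist (x t₀) (V j : Set H) ≤ (1 + 1/η) * S := by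
              intro j hj
              rw [← ht₁im] at hj
              obtain ⟨s, hs, rfl⟩ := Finset.mem_image.1 hj
              have hs' : s < t₁ := Finset.mem_range.1 hs
              have hsle : s ≤ t₀ := by omega
              have h1 : infDist (x t₀) (V (i s) : Set H)
                  ≤ infDist (x s) (V (i s) : Set H) + dist (x t₀) (x s) :=
                infDist_le_infDist_add_dist
              have h2 : η * infDist (x s) (V (i s) : Set H) ≤ u s := huη s (by omega)
              have h3 : dist (x t₀) (x s) ≤ ∑ n ∈ Finset.Ico s t₀, u n := by
                rw [dist_eq_norm]; exact htravel s t₀ hsle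
              have h4 : ∑ n ∈ Finset.Ico s t₀, u n ≤ S := by
                apply Finset.sum_le_sum_of_subset_of_nonneg
                · intro n hn
                  rw [Finset.mem_range]
                  have := (Finset.mem_Ico.1 hn).2; omega
                · exact fun n _ _ => hu0 n
              have h5 : u s ≤ S := hSu s hs'
              have h6 : infDist (x s) (V (i s) : Set H) ≤ S / η := by
                rw [le_div_iff₀ hη0]; linarith only [h2, h5]
              have h7 : S / η + S = (1 + 1/η) * S := by ring
              rw [← h7]
              linarith only [h1, h3, h4, h6]
            have hreg1 := hKm J hJne (x t₀)
            rw [← hWdef] at hreg1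
            have hsup' : (J.sup' hJne fun j => infDist (x t₀) (V j : Set H)) ≤ (1 + 1/η) * S :=
              Finset.sup'_le _ _ hsup
            have hKm0 : (0:ℝ) ≤ Km := by linarith only [hKm1]
            have h8 : dJ t₀ ≤ Km * ((1 + 1/η) * S) :=
              le_trans hreg1 (mul_le_mul_of_nonneg_left hsup' hKm0)
            have h9 : dJ t₁ ≤ dJ t₀ := hmono t₀ t₁ (by omega) ht₁T
            calc dJ t₁ ≤ Km * ((1 + 1/η) * S) := le_trans h9 h8
              _ = K * S := by rw [hKdef]; ring
          -- (W3) bound on A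
          have hA : A ≤ CA * dJ 0 ^ (1/2 : ℝ) := by
            have hsub := hCh J' i lam x hcard' hlam htraj t₀ hctrl'
            have hd'half : infDist (x 0) ((⨅ i ∈ J', V i : Submodule ℝ H) : Set H) ^ (1/2:ℝ)
                ≤ dJ 0 ^ (1/2:ℝ) := Real.rpow_le_rpow infDist_nonneg hd' (by norm_num)
            have hlast : u t₀ ≤ 2 * dJ 0 := by
              have h1 := hu2 t₀ (by omega)
              have h2 := hmono 0 t₀ (Nat.zero_le _) (by omega)
              linarith only [h1, h2]
            have hlast' : u t₀ ^ (1/2:ℝ) ≤ 2 * dJ 0 ^ (1/2:ℝ) := by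
              have h1 : u t₀ ^ (1/2:ℝ) ≤ (2 * dJ 0) ^ (1/2:ℝ) :=
                Real.rpow_le_rpow (hu0 _) hlast (by norm_num)
              have h2 : ((2:ℝ) * dJ 0) ^ (1/2:ℝ) = 2 ^ (1/2:ℝ) * dJ 0 ^ (1/2:ℝ) :=
                Real.mul_rpow (by norm_num) (hdJ0 0)
              have h3 : (2:ℝ) ^ (1/2:ℝ) ≤ 2 := by
                have h4 : (2:ℝ) ^ (1/2:ℝ) ≤ 2 ^ (1:ℝ) :=
                  Real.rpow_le_rpow_of_exponent_le one_le_two (by norm_num)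
                rwa [Real.rpow_one] at h4
              have h5 : (2:ℝ) ^ (1/2:ℝ) * dJ 0 ^ (1/2:ℝ) ≤ 2 * dJ 0 ^ (1/2:ℝ) :=
                mul_le_mul_of_nonneg_right h3 (Real.rpow_nonneg (hdJ0 0) _)
              linarith only [h2 ▸ h1, h5]
            have hsub' : (∑ n ∈ range t₀, u n ^ (1/2:ℝ)) ≤ Ch * dJ 0 ^ (1/2:ℝ) :=
              le_trans hsub (mul_le_mul_of_nonneg_left hd'half hCh0)
            have hAsplit : A = (∑ n ∈ range t₀, u n ^ (1/2:ℝ)) + u t₀ ^ (1/2:ℝ) := by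
              rw [hAdef, ht₁eq, Finset.sum_range_succ]
            rw [hAsplit, hCAdef]
            linarith only [hsub', hlast']
          -- Cauchy-Schwarz
          have hCS1 : S ^ 2 ≤ A * B := by
            have hpt : ∀ n : ℕ, u n = u n ^ (1/4:ℝ) * u n ^ (3/4:ℝ) := by
              intro n
              rw [← Real.rpow_add' (hu0 n) (by norm_num)]
              norm_num
            have hq1 : ∀ n : ℕ, (u n ^ (1/4:ℝ)) ^ 2 = u n ^ (1/2:ℝ) := by
              intro n
              rw [← Real.rpow_natCast (u n ^ (1/4:ℝ)) 2, ← Real.rpow_mul (hu0 n)]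
              norm_num
            have hq2 : ∀ n : ℕ, (u n ^ (3/4:ℝ)) ^ 2 = u n ^ (3/2:ℝ) := by
              intro n
              rw [← Real.rpow_natCast (u n ^ (3/4:ℝ)) 2, ← Real.rpow_mul (hu0 n)]
              norm_num
            have h := Finset.sum_mul_sq_le_sq_mul_sq (range t₁)
              (fun n => u n ^ (1/4:ℝ)) (fun n => u n ^ (3/4:ℝ))
            calc S ^ 2 = (∑ n ∈ range t₁, u n ^ (1/4:ℝ) * u n ^ (3/4:ℝ)) ^ 2 := by
                  rw [hSdef]
                  congr 1
                  exact Finset.sum_congr rfl fun n _ => hpt n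
              _ ≤ (∑ n ∈ range t₁, (u n ^ (1/4:ℝ)) ^ 2) * ∑ n ∈ range t₁, (u n ^ (3/4:ℝ)) ^ 2 := h
              _ = A * B := by
                  rw [hAdef, hBdef]
                  congr 1
                  · exact Finset.sum_congr rfl fun n _ => hq1 n
                  · exact Finset.sum_congr rfl fun n _ => hq2 n
          have hCS2 : B ^ 2 ≤ S * Q := by
            have hpt2 : ∀ n : ℕ, u n ^ (3/2:ℝ) = u n ^ (1/2:ℝ) * u n := by
              intro n
              have h1 : (3/2:ℝ) = 1/2 + 1 := by norm_num
              rw [h1, Real.rpow_add' (hu0 n) (by norm_num), Real.rpow_one]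
            have hq3 : ∀ n : ℕ, (u n ^ (1/2:ℝ)) ^ 2 = u n := by
              intro n
              rw [← Real.rpow_natCast (u n ^ (1/2:ℝ)) 2, ← Real.rpow_mul (hu0 n)]
              norm_num
            have h := Finset.sum_mul_sq_le_sq_mul_sq (range t₁)
              (fun n => u n ^ (1/2:ℝ)) (fun n => u n)
            calc B ^ 2 = (∑ n ∈ range t₁, u n ^ (1/2:ℝ) * u n) ^ 2 := by
                  rw [hBdef]
                  congr 1
                  exact Finset.sum_congr rfl fun n _ => hpt2 n
              _ ≤ (∑ n ∈ range t₁, (u n ^ (1/2:ℝ)) ^ 2) * ∑ n ∈ range t₁, u n ^ 2 := h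
              _ = S * Q := by
                  rw [hSdef, hQdef]
                  congr 1
                  exact Finset.sum_congr rfl fun n _ => hq3 n
          have hQtel : dJ t₁ ^ 2 + η / 2 * Q ≤ dJ 0 ^ 2 := htel t₁ ht₁T
          -- (W6) cube contraction
          have hD1cube : dJ t₁ ^ 3 ≤ σ * dJ 0 ^ 3 := by
            by_cases hS : S = 0
            · have hD1 : dJ t₁ = 0 := by
                have h := hD1S
                rw [hS, mul_zero] at h
                exact le_antisymm h (hdJ0 _)
              rw [hD1]
              have : (0:ℝ) ≤ σ * dJ 0 ^ 3 := mul_nonneg hσ0 (pow_nonneg (hdJ0 0) 3)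
              simpa using this
            · have hSpos : 0 < S := lt_of_le_of_ne hS0 (Ne.symm hS)
              have h4 : S ^ 4 ≤ A ^ 2 * (S * Q) := by
                calc S ^ 4 = (S ^ 2) ^ 2 := by ring
                  _ ≤ (A * B) ^ 2 := pow_le_pow_left₀ (sq_nonneg S) hCS1 2
                  _ = A ^ 2 * B ^ 2 := by ring
                  _ ≤ A ^ 2 * (S * Q) := mul_le_mul_of_nonneg_left hCS2 (sq_nonneg A)
              have hS3 : S ^ 3 ≤ A ^ 2 * Q := by
                have h5 : S * S ^ 3 ≤ S * (A ^ 2 * Q) := by linarith only [h4]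
                exact le_of_mul_le_mul_left h5 hSpos
              have hAQ : A ^ 2 ≤ CA ^ 2 * dJ 0 := by
                have h6 : A ^ 2 ≤ (CA * dJ 0 ^ (1/2:ℝ)) ^ 2 := pow_le_pow_left₀ hA0 hA 2
                have h7 : (dJ 0 ^ (1/2:ℝ)) ^ 2 = dJ 0 := by
                  rw [← Real.rpow_natCast (dJ 0 ^ (1/2:ℝ)) 2, ← Real.rpow_mul (hdJ0 0)]
                  norm_num
                calc A ^ 2 ≤ (CA * dJ 0 ^ (1/2:ℝ)) ^ 2 := h6
                  _ = CA ^ 2 * (dJ 0 ^ (1/2:ℝ)) ^ 2 := by ring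
                  _ = CA ^ 2 * dJ 0 := by rw [h7]
              have hQle : Q ≤ 2 / η * (dJ 0 ^ 2 - dJ t₁ ^ 2) := by
                rw [div_mul_eq_mul_div, le_div_iff₀ hη0]
                linarith only [hQtel]
              have hD1D0 : dJ t₁ ≤ dJ 0 := hmono 0 t₁ (Nat.zero_le _) ht₁T
              have hK30 : (0:ℝ) ≤ K ^ 3 := pow_nonneg hK0.le 3
              have hchain : dJ t₁ ^ 3 ≤ E * (dJ 0 ^ 3 - dJ 0 * dJ t₁ ^ 2) := by
                calc dJ t₁ ^ 3 ≤ (K * S) ^ 3 := pow_le_pow_left₀ (hdJ0 _) hD1S 3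
                  _ = K ^ 3 * S ^ 3 := by ring
                  _ ≤ K ^ 3 * (A ^ 2 * Q) := mul_le_mul_of_nonneg_left hS3 hK30
                  _ ≤ K ^ 3 * (CA ^ 2 * dJ 0 * Q) := mul_le_mul_of_nonneg_left
                        (mul_le_mul_of_nonneg_right hAQ hQ0) hK30
                  _ ≤ K ^ 3 * (CA ^ 2 * dJ 0 * (2 / η * (dJ 0 ^ 2 - dJ t₁ ^ 2))) := by
                        refine mul_le_mul_of_nonneg_left ?_ hK30
                        refine mul_le_mul_of_nonneg_left hQle ?_
                        exact mul_nonneg (sq_nonneg CA) (hdJ0 0)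
                  _ = E * (dJ 0 ^ 3 - dJ 0 * dJ t₁ ^ 2) := by
                        rw [hEdef]; field_simp
              have c7 : dJ t₁ ^ 3 ≤ dJ 0 * dJ t₁ ^ 2 := by
                have h9 := mul_le_mul_of_nonneg_right hD1D0 (sq_nonneg (dJ t₁))
                linarith only [h9]
              have c8 : (1 + E) * dJ t₁ ^ 3 ≤ E * dJ 0 ^ 3 := by
                have h9 := mul_le_mul_of_nonneg_left c7 hE0.le
                linarith only [hchain, h9]
              rw [hσdef, div_mul_eq_mul_div, le_div_iff₀ (by positivity : (0:ℝ) < 1 + E)]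
              linarith only [c8]
          -- (W7) γ-power contraction
          have hD1γ : dJ t₁ ^ γ ≤ ρ * dJ 0 ^ γ := by
            have h13 : dJ t₁ ≤ σ ^ (1/3:ℝ) * dJ 0 := by
              have h1 : dJ t₁ = (dJ t₁ ^ 3) ^ (1/3:ℝ) := by
                rw [← Real.rpow_natCast (dJ t₁) 3, ← Real.rpow_mul (hdJ0 _)]
                norm_num
              have h2 : (dJ t₁ ^ 3) ^ (1/3:ℝ) ≤ (σ * dJ 0 ^ 3) ^ (1/3:ℝ) :=
                Real.rpow_le_rpow (pow_nonneg (hdJ0 _) 3) hD1cube (by norm_num)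
              have h3 : (σ * dJ 0 ^ 3) ^ (1/3:ℝ) = σ ^ (1/3:ℝ) * dJ 0 := by
                rw [Real.mul_rpow hσ0 (pow_nonneg (hdJ0 0) 3),
                  ← Real.rpow_natCast (dJ 0) 3, ← Real.rpow_mul (hdJ0 0)]
                norm_num
              rw [← h3]
              exact le_of_le_of_eq (le_of_eq h1) rfl |>.trans h2
            have h14 : dJ t₁ ^ γ ≤ (σ ^ (1/3:ℝ) * dJ 0) ^ γ :=
              Real.rpow_le_rpow (hdJ0 _) h13 hγ.le
            have h15 : (σ ^ (1/3:ℝ) * dJ 0) ^ γ = ρ * dJ 0 ^ γ := by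
              rw [Real.mul_rpow (Real.rpow_nonneg hσ0 _) (hdJ0 0), ← Real.rpow_mul hσ0, hρdef]
            rw [← h15]
            exact h14
          -- (W8) window sum bound
          have hwin : ∑ n ∈ range t₁, u n ^ γ ≤ Cwin * dJ 0 ^ γ := by
            have hsubγ := hCγ J' i lam x hcard' hlam htraj t₀ hctrl'
            have hlast : u t₀ ≤ 2 * dJ 0 := by
              have h1 := hu2 t₀ (by omega)
              have h2 := hmono 0 t₀ (Nat.zero_le _) (by omega)
              linarith only [h1, h2]
            have hlastγ : u t₀ ^ γ ≤ 2 ^ γ * dJ 0 ^ γ := by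
              calc u t₀ ^ γ ≤ (2 * dJ 0) ^ γ := Real.rpow_le_rpow (hu0 _) hlast hγ.le
                _ = 2 ^ γ * dJ 0 ^ γ := Real.mul_rpow (by norm_num) (hdJ0 0)
            have hsubγ' : (∑ n ∈ range t₀, u n ^ γ) ≤ Cγ * dJ 0 ^ γ :=
              le_trans hsubγ (mul_le_mul_of_nonneg_left
                (Real.rpow_le_rpow infDist_nonneg hd' hγ.le) hCγ0)
            have hsplit : (∑ n ∈ range t₁, u n ^ γ)
                = (∑ n ∈ range t₀, u n ^ γ) + u t₀ ^ γ := by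
              rw [ht₁eq, Finset.sum_range_succ]
            rw [hsplit, hCwindef]
            linarith only [hsubγ', hlastγ]
          -- tail via strong induction
          have htail : ∑ n ∈ range (T - t₁), u (t₁ + n) ^ γ ≤ Ctot * dJ t₁ ^ γ := by
            have hT' : T - t₁ < T := by omega
            have h := IHT (T - t₁) hT' (fun n => i (t₁ + n)) (fun n => lam (t₁ + n))
              (fun n => x (t₁ + n)) (fun n => hlam (t₁ + n))
              (fun n => htraj (t₁ + n)) (fun n hn => hctrl (t₁ + n) (by omega))
            exact h
          -- assemble
          calc ∑ n ∈ Finset.range T, ‖x (n + 1) - x n‖ ^ γ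
              = (∑ n ∈ Finset.range t₁, ‖x (n + 1) - x n‖ ^ γ)
                + ∑ n ∈ Finset.Ico t₁ T, ‖x (n + 1) - x n‖ ^ γ :=
                (Finset.sum_range_add_sum_Ico _ ht₁T).symm
            _ = (∑ n ∈ Finset.range t₁, ‖x (n + 1) - x n‖ ^ γ)
                + ∑ n ∈ Finset.range (T - t₁), ‖x (t₁ + n + 1) - x (t₁ + n)‖ ^ γ := by
                rw [Finset.sum_Ico_eq_sum_range]
            _ ≤ Cwin * dJ 0 ^ γ + Ctot * dJ t₁ ^ γ := add_le_add hwin htail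
            _ ≤ Cwin * dJ 0 ^ γ + Ctot * (ρ * dJ 0 ^ γ) :=
                add_le_add_right (mul_le_mul_of_nonneg_left hD1γ hCtot0) _
            _ ≤ Ctot * dJ 0 ^ γ := by
                have h9 := mul_le_mul_of_nonneg_right hCwintot (Real.rpow_nonneg (hdJ0 0) γ)
                linarith only [h9]
        · -- no full sweep: proper subfamily, apply IH directly
          set J' : Finset (Fin N) := (Finset.range T).image i with hJ'def
          have hJ'sub : J' ⊆ J := by
            intro j hj
            obtain ⟨n, hn, rfl⟩ := Finset.mem_image.1 hj
            exact hctrl n (Finset.mem_range.1 hn)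
          have hJ'ne : J' ≠ J := fun h => hex ⟨T, le_rfl, h⟩
          have hcard' : J'.card ≤ m := by
            have h1 : J'.card < J.card :=
              lt_of_le_of_ne (Finset.card_le_card hJ'sub)
                (fun hc => hJ'ne (Finset.eq_of_subset_of_card_le hJ'sub (le_of_eq hc.symm)))
            omega
          have hctrl' : ∀ n < T, i n ∈ J' :=
            fun n hn => Finset.mem_image.2 ⟨n, Finset.mem_range.2 hn, rfl⟩
          have h1 := hCγ J' i lam x hcard' hlam htraj T hctrl'
          have hWW' : W ≤ (⨅ i ∈ J', V i : Submodule ℝ H) := VJ_mono V hJ'sub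
          have hd' : infDist (x 0) ((⨅ i ∈ J', V i : Submodule ℝ H) : Set H) ≤ dJ 0 :=
            infDist_anti hWW' (x 0)
          calc ∑ n ∈ Finset.range T, ‖x (n + 1) - x n‖ ^ γ
              ≤ Cγ * infDist (x 0) ((⨅ i ∈ J', V i : Submodule ℝ H) : Set H) ^ γ := h1
            _ ≤ Cγ * dJ 0 ^ γ := by
                exact mul_le_mul_of_nonneg_left
                  (Real.rpow_le_rpow infDist_nonneg hd' hγ.le) hCγ0
            _ ≤ Ctot * dJ 0 ^ γ := by
                exact mul_le_mul_of_nonneg_right hCγtot (Real.rpow_nonneg (hdJ0 0) γ)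
      intro J i lam x hcard hlam htraj T hctrl
      exact main J hcard T i lam x hlam htraj hctrl

end Key

/-- Under innate regularity, all trajectories of unrestricted relaxed
projections have uniformly bounded `γ`-moments of displacements. -/
theorem stmt_0 {H : Type*} [NormedAddCommGroup H] [InnerProductSpace ℝ H] [CompleteSpace H]
    (N : ℕ) (hN : 1 ≤ N) (V : Fin N → Submodule ℝ H) [∀ i, CompleteSpace (V i)]
    (hreg : ∀ (I : Finset (Fin N)) (hI : I.Nonempty), ∃ κ : ℝ,
      ∀ x : H, infDist x ((⨅ i ∈ I, V i : Submodule ℝ H) : Set H) ≤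
        κ * I.sup' hI (fun i => infDist x (V i : Set H)))
    (η γ : ℝ) (hη : η ∈ Set.Ioc (0 : ℝ) 1) (hγ : 0 < γ) :
    ∃ C : ℝ, ∀ (i : ℕ → Fin N) (lam : ℕ → ℝ),
      (∀ n, lam n ∈ Set.Icc η (2 - η)) →
      ∀ x : ℕ → H, (∀ n, x (n + 1) = relaxProj (V (i n)) (lam n) (x n)) →
        Summable (fun n => ‖x (n + 1) - x n‖ ^ γ) ∧
        ∑' n, ‖x (n + 1) - x n‖ ^ γ ≤ C * ‖x 0‖ ^ γ := by
  classical
  choose κ hκ using hreg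
  set f : Finset (Fin N) → ℝ := fun I => if h : I.Nonempty then max (κ I h) 1 else 1 with hf
  have hf1 : ∀ I, (1:ℝ) ≤ f I := by
    intro I
    by_cases h : I.Nonempty <;> simp [hf, h]
  set Km : ℝ := ∑ I ∈ Finset.univ.powerset, f I with hKmdef
  have hKm1 : 1 ≤ Km :=
    le_trans (hf1 ∅) (Finset.single_le_sum (fun I _ => le_trans zero_le_one (hf1 I))
      (Finset.mem_powerset.2 (Finset.empty_subset _)))
  have hKmreg : ∀ (J : Finset (Fin N)) (hJ : J.Nonempty) (y : H),
      infDist y ((⨅ i ∈ J, V i : Submodule ℝ H) : Set H) ≤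
        Km * J.sup' hJ fun j => infDist y (V j : Set H) := by
    intro J hJ y
    have h1 := hκ J hJ y
    have hsup0 : 0 ≤ J.sup' hJ fun j => infDist y (V j : Set H) := by
      obtain ⟨j, hj⟩ := hJ
      exact le_trans infDist_nonneg (Finset.le_sup' (fun j => infDist y (V j : Set H)) hj)
    have h2 : κ J hJ ≤ f J := by simp [hf, dif_pos hJ]
    have h3 : f J ≤ Km :=
      Finset.single_le_sum (fun I _ => le_trans zero_le_one (hf1 I))
        (Finset.mem_powerset.2 (Finset.subset_univ J))
    exact le_trans h1 (mul_le_mul_of_nonneg_right (le_trans h2 h3) hsup0)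
  obtain ⟨C, hC0, hC⟩ := key V hη hKm1 hKmreg N γ hγ
  refine ⟨C, ?_⟩
  intro i lam hlam x htraj
  have hmem : (0:H) ∈ ((⨅ i ∈ (Finset.univ : Finset (Fin N)), V i : Submodule ℝ H) : Set H) :=
    Submodule.zero_mem _
  have hinf : infDist (x 0)
      ((⨅ i ∈ (Finset.univ : Finset (Fin N)), V i : Submodule ℝ H) : Set H) ≤ ‖x 0‖ := by
    simpa [dist_eq_norm] using infDist_le_dist_of_mem (x := x 0) hmem
  have hbound : ∀ T, ∑ n ∈ Finset.range T, ‖x (n + 1) - x n‖ ^ γ ≤ C * ‖x 0‖ ^ γ := by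
    intro T
    have h1 := hC Finset.univ i lam x (by simp) hlam htraj T (fun n _ => Finset.mem_univ _)
    exact le_trans h1 (mul_le_mul_of_nonneg_left
      (Real.rpow_le_rpow infDist_nonneg hinf hγ.le) hC0)
  exact ⟨summable_of_sum_range_le (fun n => Real.rpow_nonneg (norm_nonneg _) γ) hbound,
    Real.tsum_le_of_sum_range_le (fun n => Real.rpow_nonneg (norm_nonneg _) γ) hbound⟩
end

section
/- Let H be a real Hilbert space and V_1,…,V_N closed subspaces of H such that each V_i is either finite-dimensional or finite-codimensional (i.e., V_i^⊥ is finite-dimensional). Then (V_1,…,V_N) is innately regular: for every nonempty I ⊆ {1,…,N} there exists a constant κ_I < ∞ such that d(x, ⋂_{i∈I} V_i) ≤ κ_I · max_{i∈I} d(x, V_i) for all x ∈ H. -/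
open Metric

section Aux

variable {H : Type*} [NormedAddCommGroup H] [InnerProductSpace ℝ H]

lemma norm_sub_proj_le' (K : Submodule ℝ H) [K.HasOrthogonalProjection] (x : H) {y : H}
    (hy : y ∈ K) : ‖x - Submodule.orthogonalProjectionOnto K x‖ ≤ ‖x - y‖ := by
  rw [Submodule.coe_orthogonalProjectionOnto_apply, Submodule.starProjection_minimal]
  exact ciInf_le ⟨0, Set.forall_mem_range.mpr fun _ => norm_nonneg _⟩ (⟨y, hy⟩ : K)

lemma infDist_eq_norm_sub_proj (K : Submodule ℝ H) [K.HasOrthogonalProjection] (x : H) :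
    infDist x (K : Set H) = ‖x - Submodule.orthogonalProjectionOnto K x‖ := by
  refine le_antisymm ?_ ?_
  · simpa [dist_eq_norm] using infDist_le_dist_of_mem (Submodule.orthogonalProjectionOnto K x).2
  · by_contra h
    push_neg at h
    obtain ⟨y, hy, hlt⟩ := (infDist_lt_iff ⟨0, K.zero_mem⟩).1 h
    rw [dist_eq_norm] at hlt
    exact absurd (norm_sub_proj_le' K x hy) (not_le.2 hlt)

lemma infDist_smul_submodule (K : Submodule ℝ H) [K.HasOrthogonalProjection] (t : ℝ) (x : H) :
    infDist (t • x) (K : Set H) = |t| * infDist x (K : Set H) := by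
  rw [infDist_eq_norm_sub_proj, infDist_eq_norm_sub_proj, map_smul]
  rw [show t • x - ((t • Submodule.orthogonalProjectionOnto K x : K) : H)
      = t • (x - Submodule.orthogonalProjectionOnto K x) by push_cast; rw [smul_sub]]
  rw [norm_smul, Real.norm_eq_abs]

lemma core_lemma (C B : Submodule ℝ H) [FiniteDimensional ℝ C] [CompleteSpace B]
    (hCB : C ⊓ B = ⊥) :
    ∃ κ : ℝ, 0 ≤ κ ∧ ∀ c ∈ C, ‖c‖ ≤ κ * infDist c (B : Set H) := by
  by_cases hC : C = ⊥
  · refine ⟨0, le_refl 0, fun c hc => ?_⟩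
    rw [hC, Submodule.mem_bot] at hc
    simp [hc]
  · obtain ⟨c₀, hc₀C, hc₀⟩ := Submodule.exists_mem_ne_zero_of_ne_bot hC
    have hS : (sphere (0 : C) 1).Nonempty := by
      refine ⟨⟨‖c₀‖⁻¹ • c₀, C.smul_mem _ hc₀C⟩, ?_⟩
      simp [Submodule.coe_norm, norm_smul, norm_ne_zero_iff.2 hc₀]
    have hcomp : IsCompact (sphere (0 : C) 1) := isCompact_sphere 0 1
    have hcont : ContinuousOn (fun c : C => infDist (c : H) (B : Set H)) (sphere (0 : C) 1) :=
      ((continuous_infDist_pt (B : Set H)).comp continuous_subtype_val).continuousOn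
    obtain ⟨u, huS, hmin⟩ := hcomp.exists_isMinOn hS hcont
    set m := infDist (u : H) (B : Set H) with hm
    have hm0 : 0 < m := by
      rcases lt_or_eq_of_le (infDist_nonneg : 0 ≤ m) with h | h
      · exact h
      · exfalso
        have huB : (u : H) ∈ B := by
          have h1 : (u : H) ∈ closure (B : Set H) :=
            (mem_closure_iff_infDist_zero ⟨0, B.zero_mem⟩).2 h.symm
          rwa [IsComplete.isClosed (completeSpace_coe_iff_isComplete.1 ‹_›) |>.closure_eq] at h1
        have : (u : H) ∈ C ⊓ B := ⟨u.2, huB⟩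
        rw [hCB, Submodule.mem_bot] at this
        have : ‖(u : H)‖ = 1 := by
          have := mem_sphere_zero_iff_norm.1 huS; rwa [Submodule.coe_norm] at this
        simp_all
    refine ⟨m⁻¹, inv_nonneg.2 hm0.le, fun c hc => ?_⟩
    by_cases hc0 : c = 0
    · simp [hc0, mul_nonneg (inv_nonneg.2 hm0.le) infDist_nonneg]
    · have hnc : ‖c‖ ≠ 0 := norm_ne_zero_iff.2 hc0
      set u' : C := ⟨‖c‖⁻¹ • c, C.smul_mem _ hc⟩
      have hu'S : u' ∈ sphere (0 : C) 1 := by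
        simp [u', Submodule.coe_norm, norm_smul, hnc]
      have h1 : m ≤ infDist ((u' : H)) (B : Set H) := hmin hu'S
      have h2 : infDist ((u' : H)) (B : Set H) = ‖c‖⁻¹ * infDist c (B : Set H) := by
        have := infDist_smul_submodule B (‖c‖⁻¹) c
        simpa [abs_of_nonneg (inv_nonneg.2 (norm_nonneg c))] using this
      rw [h2] at h1
      have h3 : m * ‖c‖ ≤ infDist c (B : Set H) := by
        have h4 := mul_le_mul_of_nonneg_right h1 (norm_nonneg c)
        rwa [mul_comm (‖c‖⁻¹) _, mul_assoc, inv_mul_cancel₀ hnc, mul_one] at h4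
      calc ‖c‖ = m⁻¹ * (m * ‖c‖) := by field_simp
        _ ≤ m⁻¹ * infDist c (B : Set H) :=
          mul_le_mul_of_nonneg_left h3 (inv_nonneg.2 hm0.le)

variable [CompleteSpace H]

lemma submodule_isClosed' (A : Submodule ℝ H) [CompleteSpace A] : IsClosed (A : Set H) :=
  (completeSpace_coe_iff_isComplete.1 ‹_›).isClosed

instance inf_complete' (A B : Submodule ℝ H) [CompleteSpace A] [CompleteSpace B] :
    CompleteSpace (A ⊓ B : Submodule ℝ H) := by
  have : IsClosed ((A ⊓ B : Submodule ℝ H) : Set H) := by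
    rw [Submodule.coe_inf]
    exact (submodule_isClosed' A).inter (submodule_isClosed' B)
  exact this.completeSpace_coe

lemma pair_lemma (A B : Submodule ℝ H) [CompleteSpace A] [CompleteSpace B]
    (hC : FiniteDimensional ℝ (A ⊓ (A ⊓ B)ᗮ : Submodule ℝ H)) :
    ∃ κ : ℝ, 0 ≤ κ ∧ ∀ x : H, infDist x ((A ⊓ B : Submodule ℝ H) : Set H) ≤
      κ * max (infDist x (A : Set H)) (infDist x (B : Set H)) := by
  set C : Submodule ℝ H := A ⊓ (A ⊓ B)ᗮ with hCdef
  have hCB : C ⊓ B = ⊥ := by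
    rw [eq_bot_iff]
    rintro c ⟨⟨hcA, hcO⟩, hcB⟩
    have : c ∈ A ⊓ B := ⟨hcA, hcB⟩
    have h0 : inner ℝ c c = (0 : ℝ) := (Submodule.mem_orthogonal _ _).1 hcO c this
    simpa using inner_self_eq_zero.1 h0
  obtain ⟨κ₀, hκ₀, hk⟩ := core_lemma C B hCB
  have step1 : ∀ a ∈ A, infDist a ((A ⊓ B : Submodule ℝ H) : Set H) ≤
      κ₀ * infDist a (B : Set H) := by
    intro a ha
    set p : H := ((Submodule.orthogonalProjectionOnto (A ⊓ B : Submodule ℝ H) a :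
      (A ⊓ B : Submodule ℝ H)) : H) with hp
    have hpAB : p ∈ A ⊓ B := (Submodule.orthogonalProjectionOnto (A ⊓ B : Submodule ℝ H) a).2
    have hcC : a - p ∈ C := ⟨A.sub_mem ha hpAB.1, Submodule.sub_starProjection_mem_orthogonal a⟩
    have heq : infDist a ((A ⊓ B : Submodule ℝ H) : Set H) = ‖a - p‖ :=
      infDist_eq_norm_sub_proj _ a
    have htrans : infDist (a - p) (B : Set H) = infDist a (B : Set H) := by
      rw [infDist_eq_norm_sub_proj, infDist_eq_norm_sub_proj]
      have hPp : ((Submodule.orthogonalProjectionOnto B p : B) : H) = p := by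
        rw [Submodule.coe_orthogonalProjectionOnto_apply, Submodule.starProjection_eq_self_iff.2 hpAB.2]
      rw [map_sub]
      push_cast
      rw [hPp]
      congr 1
      abel
    calc infDist a ((A ⊓ B : Submodule ℝ H) : Set H) = ‖a - p‖ := heq
      _ ≤ κ₀ * infDist (a - p) (B : Set H) := hk _ hcC
      _ = κ₀ * infDist a (B : Set H) := by rw [htrans]
  refine ⟨1 + 2 * κ₀, by linarith, fun x => ?_⟩
  set a : H := ((Submodule.orthogonalProjectionOnto A x : A) : H) with hadef
  have haA : a ∈ A := (Submodule.orthogonalProjectionOnto A x).2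
  have hxa : dist x a = infDist x (A : Set H) := by
    rw [dist_eq_norm, infDist_eq_norm_sub_proj]
  have h1 : infDist x ((A ⊓ B : Submodule ℝ H) : Set H) ≤
      infDist a ((A ⊓ B : Submodule ℝ H) : Set H) + dist x a := infDist_le_infDist_add_dist
  have h2 : infDist a (B : Set H) ≤ infDist x (B : Set H) + dist a x :=
    infDist_le_infDist_add_dist
  have hmax1 : infDist x (A : Set H) ≤ max (infDist x (A : Set H)) (infDist x (B : Set H)) :=
    le_max_left _ _
  have hmax2 : infDist x (B : Set H) ≤ max (infDist x (A : Set H)) (infDist x (B : Set H)) :=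
    le_max_right _ _
  have hs := step1 a haA
  rw [dist_comm] at h2
  nlinarith [infDist_nonneg (x := x) (s := (A : Set H))]

lemma pair_full (A B : Submodule ℝ H) [CompleteSpace A] [CompleteSpace B]
    (hA : FiniteDimensional ℝ A ∨ FiniteDimensional ℝ Aᗮ)
    (hB : FiniteDimensional ℝ B ∨ FiniteDimensional ℝ Bᗮ) :
    (FiniteDimensional ℝ (A ⊓ B : Submodule ℝ H) ∨
      FiniteDimensional ℝ ((A ⊓ B : Submodule ℝ H)ᗮ)) ∧
    ∃ κ : ℝ, 0 ≤ κ ∧ ∀ x : H, infDist x ((A ⊓ B : Submodule ℝ H) : Set H) ≤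
      κ * max (infDist x (A : Set H)) (infDist x (B : Set H)) := by
  rcases hA with hA | hA
  · refine ⟨Or.inl (Submodule.finiteDimensional_of_le inf_le_left), ?_⟩
    exact pair_lemma A B (Submodule.finiteDimensional_of_le inf_le_left)
  · rcases hB with hB | hB
    · refine ⟨Or.inl (Submodule.finiteDimensional_of_le inf_le_right), ?_⟩
      obtain ⟨κ, hκ, h⟩ := pair_lemma B A (Submodule.finiteDimensional_of_le inf_le_left)
      refine ⟨κ, hκ, fun x => ?_⟩
      have := h x
      rwa [inf_comm B A, max_comm] at this
    · haveI hsup : FiniteDimensional ℝ (Aᗮ ⊔ Bᗮ : Submodule ℝ H) :=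
        Submodule.finiteDimensional_sup _ _
      haveI : CompleteSpace (Aᗮ ⊔ Bᗮ : Submodule ℝ H) := FiniteDimensional.complete ℝ _
      have key : (A ⊓ B : Submodule ℝ H)ᗮ = Aᗮ ⊔ Bᗮ := by
        have h1 : A ⊓ B = (Aᗮ ⊔ Bᗮ)ᗮ := by
          rw [← Submodule.inf_orthogonal, Submodule.orthogonal_orthogonal,
            Submodule.orthogonal_orthogonal]
        rw [h1, Submodule.orthogonal_orthogonal]
      have hfd : FiniteDimensional ℝ ((A ⊓ B : Submodule ℝ H)ᗮ) := by rw [key]; infer_instance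
      refine ⟨Or.inr hfd, pair_lemma A B (Submodule.finiteDimensional_of_le inf_le_right)⟩

end Aux

/-- a collection of closed subspaces each of which is finite-dimensional or
finite-codimensional is innately regular. -/
theorem stmt_5 {H : Type*} [NormedAddCommGroup H] [InnerProductSpace ℝ H] [CompleteSpace H]
    (N : ℕ) (hN : 1 ≤ N) (V : Fin N → Submodule ℝ H) [∀ i, CompleteSpace (V i)]
    (hfin : ∀ i, FiniteDimensional ℝ (V i) ∨ FiniteDimensional ℝ ((V i)ᗮ)) :
    ∀ (I : Finset (Fin N)) (hI : I.Nonempty), ∃ κ : ℝ,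
      ∀ x : H, infDist x ((⨅ i ∈ I, V i : Submodule ℝ H) : Set H) ≤
        κ * I.sup' hI (fun i => infDist x (V i : Set H)) := by
  have main : ∀ (I : Finset (Fin N)) (hI : I.Nonempty),
      CompleteSpace (⨅ i ∈ I, V i : Submodule ℝ H) ∧
      (FiniteDimensional ℝ (⨅ i ∈ I, V i : Submodule ℝ H) ∨
        FiniteDimensional ℝ ((⨅ i ∈ I, V i : Submodule ℝ H)ᗮ)) ∧
      ∃ κ : ℝ, 0 ≤ κ ∧
        ∀ x : H, infDist x ((⨅ i ∈ I, V i : Submodule ℝ H) : Set H) ≤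
          κ * I.sup' hI (fun i => infDist x (V i : Set H)) := by
    intro I hI
    induction hI using Finset.Nonempty.cons_induction with
    | singleton a =>
      have heq : (⨅ i ∈ ({a} : Finset (Fin N)), V i : Submodule ℝ H) = V a := by simp
      rw [heq]
      exact ⟨inferInstance, hfin a, 1, zero_le_one, fun x => by simp⟩
    | cons a s ha hs ih =>
      obtain ⟨ihC, ihF, κ', hκ', ih⟩ := ih
      have heq : (⨅ i ∈ Finset.cons a s ha, V i : Submodule ℝ H)
          = V a ⊓ (⨅ i ∈ s, V i : Submodule ℝ H) := by
        rw [Finset.cons_eq_insert, Finset.iInf_insert]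
      haveI := ihC
      obtain ⟨hF, κ, hκ, hbound⟩ := pair_full (V a) (⨅ i ∈ s, V i : Submodule ℝ H) (hfin a) ihF
      rw [heq]
      refine ⟨inferInstance, hF, κ * max 1 κ', ?_, fun x => ?_⟩
      · positivity
      · have hsup : (Finset.cons a s ha).sup' (Finset.cons_nonempty ha)
            (fun i => infDist x (V i : Set H))
            = max (infDist x (V a : Set H)) (s.sup' hs (fun i => infDist x (V i : Set H))) := by
          rw [Finset.sup'_cons hs]
        have hd1 : 0 ≤ infDist x ((V a : Set H)) := infDist_nonneg
        have hd2 : infDist x ((V a : Set H)) ≤ s.sup' hs (fun i => infDist x (V i : Set H)) ∨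
            True := Or.inr trivial
        set M := max (infDist x (V a : Set H)) (s.sup' hs (fun i => infDist x (V i : Set H)))
          with hM
        have hM0 : 0 ≤ M := le_trans hd1 (le_max_left _ _)
        have h1 : infDist x (V a : Set H) ≤ M := le_max_left _ _
        have h2 : s.sup' hs (fun i => infDist x (V i : Set H)) ≤ M := le_max_right _ _
        have hstep : max (infDist x (V a : Set H))
            (κ' * s.sup' hs (fun i => infDist x (V i : Set H))) ≤ max 1 κ' * M := by
          apply max_le
          · calc infDist x (V a : Set H) ≤ M := h1
              _ = 1 * M := (one_mul M).symm
              _ ≤ max 1 κ' * M := mul_le_mul_of_nonneg_right (le_max_left _ _) hM0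
          · calc κ' * s.sup' hs (fun i => infDist x (V i : Set H)) ≤ κ' * M :=
                mul_le_mul_of_nonneg_left h2 hκ'
              _ ≤ max 1 κ' * M := mul_le_mul_of_nonneg_right (le_max_right _ _) hM0
        calc infDist x ((V a ⊓ (⨅ i ∈ s, V i : Submodule ℝ H) : Submodule ℝ H) : Set H)
            ≤ κ * max (infDist x (V a : Set H))
              (infDist x ((⨅ i ∈ s, V i : Submodule ℝ H) : Set H)) := hbound x
          _ ≤ κ * max (infDist x (V a : Set H))
              (κ' * s.sup' hs (fun i => infDist x (V i : Set H))) := by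
              apply mul_le_mul_of_nonneg_left _ hκ
              exact max_le_max (le_refl _) (ih x)
          _ ≤ κ * (max 1 κ' * M) := mul_le_mul_of_nonneg_left hstep hκ
          _ = κ * max 1 κ' * ((Finset.cons a s ha).sup' (Finset.cons_nonempty ha)
              (fun i => infDist x (V i : Set H))) := by rw [hsup, mul_assoc]
  intro I hI
  obtain ⟨_, _, κ, _, h⟩ := main I hI
  exact ⟨κ, h⟩
end

section
/- Let V be a closed subspace of a real Hilbert space H, let λ ∈ [0,2] and ε ∈ [0,1]. Then for every x ∈ H with d(x,V) ≥ ε·‖x‖, one has ‖P_{V,λ}x‖ ≤ (1 − λ(2−λ)ε²)^{1/2}·‖x‖. -/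
open Metric
open scoped InnerProductSpace

/-- strict contraction of a relaxed projection away from the subspace. -/
theorem stmt_8 {H : Type*} [NormedAddCommGroup H] [InnerProductSpace ℝ H] [CompleteSpace H]
    (V : Submodule ℝ H) [CompleteSpace V]
    (l : ℝ) (hl : l ∈ Set.Icc (0 : ℝ) 2) (ε : ℝ) (hε : ε ∈ Set.Icc (0 : ℝ) 1) :
    ∀ x : H, ε * ‖x‖ ≤ infDist x (V : Set H) →
      ‖relaxProj V l x‖ ≤ Real.sqrt (1 - l * (2 - l) * ε ^ 2) * ‖x‖ := by
  intro x hx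
  set p : H := (V.orthogonalProjectionOnto x : H) with hp
  set q : H := x - p with hq
  have hpq : ⟪p, q⟫_ℝ = 0 := by
    have hqmem : q ∈ Vᗮ := V.sub_starProjection_mem_orthogonal x
    exact real_inner_comm q p ▸ (Submodule.mem_orthogonal' V q).mp hqmem p (V.orthogonalProjectionOnto x).2
  have hrel : relaxProj V l x = p + (1 - l) • q := by
    simp only [relaxProj, hq, hp, smul_sub]
    module
  have hxpq : x = p + q := by
    simp [hq]
  -- distance bound
  have hd : infDist x (V : Set H) ≤ ‖q‖ := by
    have := infDist_le_dist_of_mem (x := x) (V.orthogonalProjectionOnto x).2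
    rw [dist_eq_norm] at this
    exact this
  have hεx : ε * ‖x‖ ≤ ‖q‖ := hx.trans hd
  have hεx0 : 0 ≤ ε * ‖x‖ := mul_nonneg hε.1 (norm_nonneg x)
  have hsq : (ε * ‖x‖) ^ 2 ≤ ‖q‖ ^ 2 := by
    exact pow_le_pow_left₀ hεx0 hεx 2
  have hl2 : 0 ≤ l * (2 - l) := mul_nonneg hl.1 (by linarith [hl.2])
  have hnormx : ‖x‖ ^ 2 = ‖p‖ ^ 2 + ‖q‖ ^ 2 := by
    rw [hxpq]
    rw [norm_add_sq_real, hpq]; ring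
  have hnormr : ‖relaxProj V l x‖ ^ 2 = ‖p‖ ^ 2 + (1 - l) ^ 2 * ‖q‖ ^ 2 := by
    rw [hrel, norm_add_sq_real, real_inner_smul_right, hpq, norm_smul]
    simp [mul_pow, sq_abs]
  have key : ‖relaxProj V l x‖ ^ 2 ≤ (1 - l * (2 - l) * ε ^ 2) * ‖x‖ ^ 2 := by
    have : ‖relaxProj V l x‖ ^ 2 = ‖x‖ ^ 2 - l * (2 - l) * ‖q‖ ^ 2 := by
      rw [hnormr, hnormx]; ring
    rw [this]
    nlinarith [hsq]
  calc ‖relaxProj V l x‖ = Real.sqrt (‖relaxProj V l x‖ ^ 2) := by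
        rw [Real.sqrt_sq (norm_nonneg _)]
    _ ≤ Real.sqrt ((1 - l * (2 - l) * ε ^ 2) * ‖x‖ ^ 2) := Real.sqrt_le_sqrt key
    _ = Real.sqrt (1 - l * (2 - l) * ε ^ 2) * ‖x‖ := by
        rw [Real.sqrt_mul' _ (sq_nonneg ‖x‖), Real.sqrt_sq (norm_nonneg x)]
end

section
/- Let V and W be closed subspaces of a real Hilbert space H with V ⊆ W. Then for every λ ∈ [0,2] and every x ∈ H, the relaxed projection does not increase the relative distance to V: d(P_{W,λ}x, V)·‖x‖ ≤ d(x, V)·‖P_{W,λ}x‖ (equivalently, θ_V(P_{W,λ}x) ≤ θ_V(x)). -/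
open Metric
open scoped RealInnerProductSpace

lemma infDist_eq_norm_sub_proj_s9 {H : Type*} [NormedAddCommGroup H] [InnerProductSpace ℝ H]
    (V : Submodule ℝ H) [V.HasOrthogonalProjection] (x : H) :
    infDist x (V : Set H) = ‖x - (V.orthogonalProjectionOnto x : H)‖ := by
  rw [infDist_eq_iInf, ← Submodule.starProjection_apply, Submodule.starProjection_minimal]
  congr 1 with y
  rw [dist_eq_norm]

/-- relaxed projection onto `W` does not increase the relative distance to a
subspace `V ⊆ W`: `θ_V(P_{W,λ}x) ≤ θ_V(x)`, in cleared-denominator form. -/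
theorem stmt_9 {H : Type*} [NormedAddCommGroup H] [InnerProductSpace ℝ H] [CompleteSpace H]
    (V W : Submodule ℝ H) [CompleteSpace V] [CompleteSpace W] (hVW : V ≤ W)
    (l : ℝ) (hl : l ∈ Set.Icc (0 : ℝ) 2) (x : H) :
    infDist (relaxProj W l x) (V : Set H) * ‖x‖ ≤
      infDist x (V : Set H) * ‖relaxProj W l x‖ := by
  obtain ⟨hl0, hl2⟩ := hl
  set v : H := (V.orthogonalProjectionOnto x : H) with hv
  set u : H := (W.orthogonalProjectionOnto x : H) - v with hu
  set c : H := x - (W.orthogonalProjectionOnto x : H) with hc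
  set y : H := relaxProj W l x with hy
  have hxdecomp : x = v + u + c := by simp [hu, hc]
  have hydecomp : y = v + u + (1 - l) • c := by
    simp only [hy, relaxProj, hu, hc]
    module
  have hvV : v ∈ V := (V.orthogonalProjectionOnto x).2
  have huVp : u ∈ Vᗮ := by
    have h1 : x - v ∈ Vᗮ := Submodule.sub_starProjection_mem_orthogonal (K := V) x
    have h2 : c ∈ Wᗮ := Submodule.sub_starProjection_mem_orthogonal (K := W) x
    have h3 : c ∈ Vᗮ := Submodule.orthogonal_le hVW h2
    have : u = (x - v) - c := by simp [hu, hc]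
    rw [this]; exact Submodule.sub_mem _ h1 h3
  have hcWp : c ∈ Wᗮ := Submodule.sub_starProjection_mem_orthogonal (K := W) x
  have hcVp : c ∈ Vᗮ := Submodule.orthogonal_le hVW hcWp
  -- orthogonal projection of y onto V is v
  have hPy : (V.orthogonalProjectionOnto y : H) = v := by
    apply Submodule.eq_starProjection_of_mem_orthogonal' (K := V) hvV
      (Submodule.add_mem _ huVp (Submodule.smul_mem _ _ hcVp)) (by rw [hydecomp]; abel)
  have hPx : (V.orthogonalProjectionOnto x : H) = v := rfl
  -- inner product zeros
  have hvu : (inner ℝ v u : ℝ) = 0 := (Submodule.mem_orthogonal _ _).1 huVp v hvV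
  have hvc : (inner ℝ v c : ℝ) = 0 := (Submodule.mem_orthogonal _ _).1 hcVp v hvV
  have huc : (inner ℝ u c : ℝ) = 0 := by
    refine (Submodule.mem_orthogonal _ _).1 hcWp u ?_
    have : (W.orthogonalProjectionOnto x : H) ∈ W := (W.orthogonalProjectionOnto x).2
    exact Submodule.sub_mem _ this (hVW hvV)
  -- distances
  have hdx : infDist x (V : Set H) = ‖u + c‖ := by
    rw [infDist_eq_norm_sub_proj_s9, hPx, hxdecomp]; congr 1; abel
  have hdy : infDist y (V : Set H) = ‖u + (1 - l) • c‖ := by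
    rw [infDist_eq_norm_sub_proj_s9, hPy, hydecomp]; congr 1; abel
  set t : ℝ := (1 - l) ^ 2 with ht
  have ht1 : t ≤ 1 := by nlinarith
  have ht0 : 0 ≤ t := sq_nonneg _
  set A := ‖v‖ ^ 2; set B := ‖u‖ ^ 2; set C := ‖c‖ ^ 2
  have hA : 0 ≤ A := sq_nonneg _
  have hB : 0 ≤ B := sq_nonneg _
  have hC : 0 ≤ C := sq_nonneg _
  have hnx : ‖x‖ ^ 2 = A + B + C := by
    rw [hxdecomp, norm_add_sq_real, norm_add_sq_real, hvu, inner_add_left, hvc, huc]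
    ring
  have hny : ‖y‖ ^ 2 = A + B + t * C := by
    rw [hydecomp, norm_add_sq_real, norm_add_sq_real, hvu, real_inner_smul_right,
      inner_add_left, hvc, huc, norm_smul]
    simp only [Real.norm_eq_abs, mul_pow, sq_abs, ht]
    ring
  have hdx2 : infDist x (V : Set H) ^ 2 = B + C := by
    rw [hdx, norm_add_sq_real, huc]; ring
  have hdy2 : infDist y (V : Set H) ^ 2 = B + t * C := by
    rw [hdy, norm_add_sq_real, real_inner_smul_right, huc, norm_smul]
    simp only [Real.norm_eq_abs, mul_pow, sq_abs, ht]
    ring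
  have h1 : 0 ≤ infDist y (V : Set H) := infDist_nonneg
  have h2 : 0 ≤ infDist x (V : Set H) := infDist_nonneg
  have h3 : (0:ℝ) ≤ ‖x‖ := norm_nonneg _
  have h4 : (0:ℝ) ≤ ‖y‖ := norm_nonneg _
  have key : (infDist y (V : Set H) * ‖x‖) ^ 2 ≤ (infDist x (V : Set H) * ‖y‖) ^ 2 := by
    rw [mul_pow, mul_pow, hnx, hny, hdx2, hdy2]
    nlinarith [mul_nonneg (mul_nonneg hA hC) (sub_nonneg.2 ht1)]
  have := Real.sqrt_le_sqrt key
  rwa [Real.sqrt_sq (mul_nonneg h1 h3), Real.sqrt_sq (mul_nonneg h2 h4)] at this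
end

section
/- Let H be a real Hilbert space, V_1,…,V_N closed subspaces of H, and suppose κ ≥ 2 is a constant such that d(x, V_I ∩ V_J) ≤ κ·max(d(x, V_I), d(x, V_J)) for all I, J ⊆ {1,…,N} and all x ∈ H. Let (i_n)_{n≥0} be any sequence in {1,…,N}, (λ_n)_{n≥0} any sequence in [0,2], x_0 ∈ H, and define the trajectory x_{n+1} := P_{i_n,λ_n}(x_n). Set I_n := {i_k : 0 ≤ k ≤ n}. Then for every n ≥ 0, θ_{V_{I_n}}(x_{n+1}) ≤ κ^{|I_n|} · max_{0 ≤ k ≤ n} θ_{V_{i_k}}(x_k). -/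
open Metric

/-- The relative distance function `θ_V(x) = d(x,V)/‖x‖` (with `θ_V(0) = 0`). -/
noncomputable def relDist {H : Type*} [NormedAddCommGroup H] [InnerProductSpace ℝ H]
    (V : Submodule ℝ H) (x : H) : ℝ :=
  infDist x (V : Set H) / ‖x‖

section Aux

variable {H : Type*} [NormedAddCommGroup H] [InnerProductSpace ℝ H]

open RealInnerProductSpace

lemma relDist_nonneg (V : Submodule ℝ H) (x : H) : 0 ≤ relDist V x :=
  div_nonneg infDist_nonneg (norm_nonneg x)

lemma infDist_eq_relDist (V : Submodule ℝ H) (x : H) :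
    infDist x (V : Set H) = relDist V x * ‖x‖ := by
  by_cases h : x = 0
  · subst h
    rw [infDist_zero_of_mem (by exact V.zero_mem)]
    simp [relDist]
  · rw [relDist, div_mul_cancel₀]
    exact norm_ne_zero_iff.2 h

lemma infDist_orthogonalProjection (W : Submodule ℝ H) [W.HasOrthogonalProjection] (x : H) :
    infDist x (W : Set H) = ‖x - (W.orthogonalProjectionOnto x : H)‖ := by
  set w := (W.orthogonalProjectionOnto x : H) with hw
  have hwW : w ∈ W := SetLike.coe_mem _
  have hle : ∀ y ∈ W, ‖x - w‖ ≤ ‖x - y‖ := by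
    intro y hy
    have h0 : ⟪x - w, w - y⟫ = 0 :=
      W.starProjection_inner_eq_zero x (w - y) (Submodule.sub_mem W hwW hy)
    have hxy : x - y = (x - w) + (w - y) := by abel
    have h2 : ‖x - y‖ ^ 2 = ‖x - w‖ ^ 2 + ‖w - y‖ ^ 2 := by
      rw [hxy, norm_add_sq_real, h0]; ring
    nlinarith [norm_nonneg (x - y), norm_nonneg (x - w), sq_nonneg ‖w - y‖]
  refine le_antisymm ?_ ?_
  · rw [← dist_eq_norm]
    exact infDist_le_dist_of_mem hwW
  · by_contra hcon
    push_neg at hcon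
    obtain ⟨y, hy, hlt⟩ := (infDist_lt_iff ⟨0, W.zero_mem⟩).1 hcon
    rw [dist_eq_norm] at hlt
    exact absurd (hle y hy) (not_le.2 hlt)

/-- KEY monotonicity: if `W ≤ V`, the relative distance to `W` does not increase under a
relaxed projection onto `V` with parameter in `[0,2]`. -/
lemma relDist_relaxProj_le (W V : Submodule ℝ H) [V.HasOrthogonalProjection]
    [W.HasOrthogonalProjection] (hWV : W ≤ V) {l : ℝ} (hl : l ∈ Set.Icc (0 : ℝ) 2) (x : H) :
    relDist W (relaxProj V l x) ≤ relDist W x := by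
  set P := (V.orthogonalProjectionOnto x : H) with hP
  set b := x - P with hb'
  have hb : b ∈ Vᗮ := V.sub_starProjection_mem_orthogonal x
  have hPV : P ∈ V := SetLike.coe_mem _
  set x' := relaxProj V l x with hx'def
  have hx' : x' = P + (1 - l) • b := by
    rw [hx'def, relaxProj, hb']; module
  set w := (W.orthogonalProjectionOnto x : H) with hw
  have hwW : w ∈ W := SetLike.coe_mem _
  have hwV : w ∈ V := hWV hwW
  have pythag : ∀ c ∈ V, ∀ t : ℝ, ‖c + t • b‖ ^ 2 = ‖c‖ ^ 2 + t ^ 2 * ‖b‖ ^ 2 := by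
    intro c hc t
    have h0 : ⟪c, t • b⟫ = 0 := by
      rw [real_inner_smul_right, (Submodule.mem_orthogonal V b).1 hb c hc, mul_zero]
    rw [norm_add_sq_real, h0, norm_smul]
    simp [mul_pow, sq_abs]
  have e1 : ‖x‖ ^ 2 = ‖P‖ ^ 2 + 1 ^ 2 * ‖b‖ ^ 2 := by
    have : x = P + (1 : ℝ) • b := by rw [hb']; module
    rw [this]; exact pythag P hPV 1
  have e2 : ‖x - w‖ ^ 2 = ‖P - w‖ ^ 2 + 1 ^ 2 * ‖b‖ ^ 2 := by
    have : x - w = (P - w) + (1 : ℝ) • b := by rw [hb']; module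
    rw [this]; exact pythag (P - w) (Submodule.sub_mem V hPV hwV) 1
  have e3 : ‖x'‖ ^ 2 = ‖P‖ ^ 2 + (1 - l) ^ 2 * ‖b‖ ^ 2 := by
    rw [hx']; exact pythag P hPV (1 - l)
  have e4 : ‖x' - w‖ ^ 2 = ‖P - w‖ ^ 2 + (1 - l) ^ 2 * ‖b‖ ^ 2 := by
    have : x' - w = (P - w) + (1 - l) • b := by rw [hx']; module
    rw [this]; exact pythag (P - w) (Submodule.sub_mem V hPV hwV) (1 - l)
  have ht : (1 - l) ^ 2 ≤ 1 := by nlinarith [hl.1, hl.2]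
  have hxw_eq : infDist x (W : Set H) = ‖x - w‖ := infDist_orthogonalProjection W x
  clear_value P b x' w
  have hxw_le : ‖x - w‖ ≤ ‖x‖ := by
    rw [← hxw_eq]
    calc infDist x (W : Set H) ≤ dist x 0 := infDist_le_dist_of_mem W.zero_mem
      _ = ‖x‖ := dist_zero_right x
  have hA : ‖P - w‖ ^ 2 ≤ ‖P‖ ^ 2 := by nlinarith [norm_nonneg x, norm_nonneg (x - w)]
  have hd' : infDist x' (W : Set H) ≤ ‖x' - w‖ := by
    rw [← dist_eq_norm]; exact infDist_le_dist_of_mem hwW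
  have hsq : (infDist x' (W : Set H) * ‖x‖) ^ 2 ≤ (infDist x (W : Set H) * ‖x'‖) ^ 2 := by
    rw [mul_pow, mul_pow, hxw_eq]
    have h1 : (infDist x' (W : Set H)) ^ 2 ≤ ‖x' - w‖ ^ 2 := by
      have := infDist_nonneg (x := x') (s := (W : Set H))
      nlinarith
    calc (infDist x' (W : Set H)) ^ 2 * ‖x‖ ^ 2 ≤ ‖x' - w‖ ^ 2 * ‖x‖ ^ 2 :=
          mul_le_mul_of_nonneg_right h1 (sq_nonneg ‖x‖)
      _ ≤ ‖x - w‖ ^ 2 * ‖x'‖ ^ 2 := by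
          rw [e4, e1, e2, e3]
          nlinarith [mul_nonneg (mul_nonneg (sub_nonneg.2 ht) (sq_nonneg ‖b‖))
            (sub_nonneg.2 hA)]
  have hmul : infDist x' (W : Set H) * ‖x‖ ≤ infDist x (W : Set H) * ‖x'‖ := by
    have h1 : 0 ≤ infDist x (W : Set H) * ‖x'‖ :=
      mul_nonneg infDist_nonneg (norm_nonneg _)
    exact le_of_pow_le_pow_left₀ two_ne_zero h1 hsq
  by_cases h0 : ‖x'‖ = 0
  · have hz : infDist x' (W : Set H) = 0 := by
      have h1 : infDist x' (W : Set H) ≤ dist x' 0 := infDist_le_dist_of_mem W.zero_mem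
      rw [dist_zero_right, h0] at h1
      exact le_antisymm h1 infDist_nonneg
    rw [relDist, hz, zero_div]
    exact relDist_nonneg W x
  · have hx'pos : 0 < ‖x'‖ := lt_of_le_of_ne (norm_nonneg _) (Ne.symm h0)
    have hxpos : 0 < ‖x‖ := by
      have h2 : ‖x'‖ ^ 2 ≤ ‖x‖ ^ 2 := by nlinarith [sq_nonneg ‖b‖]
      nlinarith [norm_nonneg x]
    rw [relDist, relDist, div_le_div_iff₀ hx'pos hxpos]
    exact hmul

lemma completeSpace_finsetInf {ι : Type*} [CompleteSpace H] (V : ι → Submodule ℝ H)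
    [∀ i, CompleteSpace (V i)] (s : Finset ι) :
    CompleteSpace ↥(⨅ j ∈ s, V j) := by
  have hcl : IsClosed ((⨅ j ∈ s, V j : Submodule ℝ H) : Set H) := by
    have heq : ((⨅ j ∈ s, V j : Submodule ℝ H) : Set H) = ⋂ j ∈ s, (V j : Set H) := by
      simp only [Submodule.coe_iInf]
    rw [heq]
    exact isClosed_biInter fun j _ =>
      (completeSpace_coe_iff_isComplete.mp (inferInstance : CompleteSpace (V j))).isClosed
  exact hcl.completeSpace_coe

end Aux

/-- growth lemma:
`θ_{V_{I_n}}(x_{n+1}) ≤ κ^{|I_n|} · max_{0≤k≤n} θ_{V_{i_k}}(x_k)`. -/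
theorem stmt_13 {H : Type*} [NormedAddCommGroup H] [InnerProductSpace ℝ H] [CompleteSpace H]
    (N : ℕ) (hN : 1 ≤ N) (V : Fin N → Submodule ℝ H) [∀ i, CompleteSpace (V i)]
    (κ : ℝ) (hκ : 2 ≤ κ)
    (hreg : ∀ (I J : Finset (Fin N)) (x : H),
      infDist x ((((⨅ i ∈ I, V i) ⊓ ⨅ j ∈ J, V j) : Submodule ℝ H) : Set H) ≤
        κ * max (infDist x ((⨅ i ∈ I, V i : Submodule ℝ H) : Set H))
                (infDist x ((⨅ j ∈ J, V j : Submodule ℝ H) : Set H)))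
    (i : ℕ → Fin N) (lam : ℕ → ℝ) (hlam : ∀ n, lam n ∈ Set.Icc (0 : ℝ) 2)
    (x : ℕ → H) (hx : ∀ n, x (n + 1) = relaxProj (V (i n)) (lam n) (x n)) :
    ∀ n : ℕ,
      relDist (⨅ j ∈ (Finset.range (n + 1)).image i, V j) (x (n + 1)) ≤
        κ ^ ((Finset.range (n + 1)).image i).card *
          (Finset.range (n + 1)).sup' Finset.nonempty_range_add_one
            (fun k => relDist (V (i k)) (x k)) := by
  -- notation
  set S : ℕ → Finset (Fin N) := fun n => (Finset.range (n + 1)).image i with hS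
  set M : ℕ → ℝ := fun n => (Finset.range (n + 1)).sup' Finset.nonempty_range_add_one
    (fun k => relDist (V (i k)) (x k)) with hM
  have hκ0 : (0 : ℝ) < κ := lt_of_lt_of_le two_pos hκ
  have hκ1 : (1 : ℝ) ≤ κ := le_trans one_le_two hκ
  have hMnonneg : ∀ n, 0 ≤ M n := by
    intro n
    have h0 : (0 : ℕ) ∈ Finset.range (n + 1) := Finset.mem_range.2 (Nat.succ_pos n)
    simp only [hM]
    exact le_trans (relDist_nonneg (V (i 0)) (x 0))
      (Finset.le_sup' (fun k => relDist (V (i k)) (x k)) h0)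
  have hMmono : ∀ n, M n ≤ M (n + 1) := by
    intro n
    simp only [hM]
    apply Finset.sup'_le
    intro k hk
    exact Finset.le_sup' (fun k => relDist (V (i k)) (x k))
      (Finset.mem_range.2 (lt_trans (Finset.mem_range.1 hk) (Nat.lt_succ_self _)))
  have hMle : ∀ k n, k ≤ n → relDist (V (i k)) (x k) ≤ M n := by
    intro k n hkn
    simp only [hM]
    exact Finset.le_sup' (fun k => relDist (V (i k)) (x k))
      (Finset.mem_range.2 (Nat.lt_succ_of_le hkn))
  have hmemS : ∀ n, i n ∈ S n := by
    intro n
    exact Finset.mem_image_of_mem i (Finset.mem_range.2 (Nat.lt_succ_self n))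
  have hWle : ∀ n, (⨅ j ∈ S n, V j) ≤ V (i n) := by
    intro n
    exact iInf₂_le (i n) (hmemS n)
  haveI : ∀ s : Finset (Fin N), CompleteSpace ↥(⨅ j ∈ s, V j) :=
    fun s => completeSpace_finsetInf V s
  -- the step estimate: relative distance to W n does not increase along the step n
  have hstep : ∀ n, relDist (⨅ j ∈ S n, V j) (x (n + 1)) ≤ relDist (⨅ j ∈ S n, V j) (x n) := by
    intro n
    rw [hx n]
    exact relDist_relaxProj_le _ _ (hWle n) (hlam n) (x n)
  -- main induction
  have Q : ∀ n, relDist (⨅ j ∈ S n, V j) (x n) ≤ κ ^ (S n).card * M n := by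
    intro n
    induction n with
    | zero =>
      have hS0 : S 0 = {i 0} := by
        simp [hS]
      rw [hS0]
      simp only [Finset.iInf_singleton, Finset.card_singleton, pow_one]
      have hM0 : M 0 = relDist (V (i 0)) (x 0) := by
        simp [hM]
      rw [hM0]
      nlinarith [relDist_nonneg (V (i 0)) (x 0)]
    | succ n ih =>
      have hSsucc : S (n + 1) = insert (i (n + 1)) (S n) := by
        rw [hS]
        simp only
        rw [Finset.range_add_one, Finset.image_insert]
      have hprev : relDist (⨅ j ∈ S n, V j) (x (n + 1)) ≤ κ ^ (S n).card * M n :=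
        le_trans (hstep n) ih
      by_cases hmem : i (n + 1) ∈ S n
      · have hSeq : S (n + 1) = S n := by rw [hSsucc, Finset.insert_eq_self.2 hmem]
        rw [hSeq]
        calc relDist (⨅ j ∈ S n, V j) (x (n + 1)) ≤ κ ^ (S n).card * M n := hprev
          _ ≤ κ ^ (S n).card * M (n + 1) :=
            mul_le_mul_of_nonneg_left (hMmono n) (le_of_lt (pow_pos hκ0 _))
      · have hcard : (S (n + 1)).card = (S n).card + 1 := by
          rw [hSsucc, Finset.card_insert_of_notMem hmem]
        have hWeq : (⨅ j ∈ S (n + 1), V j) = (⨅ j ∈ S n, V j) ⊓ V (i (n + 1)) := by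
          rw [hSsucc, Finset.iInf_insert]
          exact inf_comm _ _
        have hreg' := hreg (S n) {i (n + 1)} (x (n + 1))
        rw [Finset.iInf_singleton] at hreg'
        rw [← hWeq] at hreg'
        -- bound the max
        have hb1 : infDist (x (n + 1)) ((⨅ j ∈ S n, V j : Submodule ℝ H) : Set H) ≤
            κ ^ (S n).card * M (n + 1) * ‖x (n + 1)‖ := by
          rw [infDist_eq_relDist]
          apply mul_le_mul_of_nonneg_right _ (norm_nonneg _)
          calc relDist (⨅ j ∈ S n, V j) (x (n + 1)) ≤ κ ^ (S n).card * M n := hprev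
            _ ≤ κ ^ (S n).card * M (n + 1) :=
              mul_le_mul_of_nonneg_left (hMmono n) (le_of_lt (pow_pos hκ0 _))
        have hb2 : infDist (x (n + 1)) ((V (i (n + 1)) : Submodule ℝ H) : Set H) ≤
            κ ^ (S n).card * M (n + 1) * ‖x (n + 1)‖ := by
          rw [infDist_eq_relDist]
          apply mul_le_mul_of_nonneg_right _ (norm_nonneg _)
          calc relDist (V (i (n + 1))) (x (n + 1)) ≤ M (n + 1) := hMle (n + 1) (n + 1) le_rfl
            _ ≤ κ ^ (S n).card * M (n + 1) := by
              have hp : (1 : ℝ) ≤ κ ^ (S n).card := one_le_pow₀ hκ1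
              nlinarith [hMnonneg (n + 1)]
        have hmax : max (infDist (x (n + 1)) ((⨅ j ∈ S n, V j : Submodule ℝ H) : Set H))
            (infDist (x (n + 1)) ((V (i (n + 1)) : Submodule ℝ H) : Set H)) ≤
            κ ^ (S n).card * M (n + 1) * ‖x (n + 1)‖ := max_le hb1 hb2
        have hfin : infDist (x (n + 1)) ((⨅ j ∈ S (n + 1), V j : Submodule ℝ H) : Set H) ≤
            κ * (κ ^ (S n).card * M (n + 1) * ‖x (n + 1)‖) :=
          le_trans hreg' (mul_le_mul_of_nonneg_left hmax (le_of_lt hκ0))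
        rw [hcard]
        by_cases h0 : ‖x (n + 1)‖ = 0
        · have hz : infDist (x (n + 1)) ((⨅ j ∈ S (n + 1), V j : Submodule ℝ H) : Set H) = 0 := by
            have h1 : infDist (x (n + 1)) ((⨅ j ∈ S (n + 1), V j : Submodule ℝ H) : Set H) ≤
                dist (x (n + 1)) 0 := infDist_le_dist_of_mem (Submodule.zero_mem _)
            rw [dist_zero_right, h0] at h1
            exact le_antisymm h1 infDist_nonneg
          rw [relDist, hz, zero_div]
          exact mul_nonneg (le_of_lt (pow_pos hκ0 _)) (hMnonneg (n + 1))
        · have hpos : 0 < ‖x (n + 1)‖ := lt_of_le_of_ne (norm_nonneg _) (Ne.symm h0)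
          rw [relDist, div_le_iff₀ hpos]
          calc infDist (x (n + 1)) ((⨅ j ∈ S (n + 1), V j : Submodule ℝ H) : Set H) ≤
              κ * (κ ^ (S n).card * M (n + 1) * ‖x (n + 1)‖) := hfin
            _ = κ ^ ((S n).card + 1) * M (n + 1) * ‖x (n + 1)‖ := by ring
  intro n
  exact le_trans (hstep n) (Q n)
end
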